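/- If two bracket-monomials are equal in the free algebra F⟨X⟩, then they coincide: if x_{t₁}⋯x_{t_l}[x_{r₁},x_{s₁}]⋯[x_{r_k},x_{s_k}] = x_{t'₁}⋯x_{t'_{l'}}[x_{r'₁},x_{s'₁}]⋯[x_{r'_{k'}},x_{s'_{k'}}] in F⟨X⟩, where all r_i < s_i and r'_j < s'_j with k, k' > 0, then l = l', k = k', and the index sequences t, r, s coincide with t', r', s' respectively. -/

import Mathlib

/-- The bracket-monomial `x_{t₁}⋯x_{t_l} [x_{r₁},x_{s₁}]⋯[x_{r_k},x_{s_k}]`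
in the free algebra, encoded by the list `t` and the list `rs` of pairs. -/
noncomputable def bracketMonomial (F : Type) [Field F] (t : List ℕ) (rs : List (ℕ × ℕ)) :
    FreeAlgebra F ℕ :=
  (t.map (FreeAlgebra.ι F)).prod *
    (rs.map fun p => FreeAlgebra.ι F p.1 * FreeAlgebra.ι F p.2 -
      FreeAlgebra.ι F p.2 * FreeAlgebra.ι F p.1).prod

open FreeMonoid MonoidAlgebra

/-- All orderings of the pair list, as words. -/
def brWords : List (ℕ × ℕ) → List (List ℕ)
  | [] => [[]]
  | p :: ps =>
      (brWords ps).map (fun w => p.1 :: p.2 :: w) ++ (brWords ps).map (fun w => p.2 :: p.1 :: w)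

/-- Canonical word: each pair in its given order. -/
def brW0 : List (ℕ × ℕ) → List ℕ
  | [] => []
  | p :: ps => p.1 :: p.2 :: brW0 ps

lemma brW0_mem : ∀ rs, brW0 rs ∈ brWords rs
  | [] => by simp [brWords, brW0]
  | p :: ps => by
      simp only [brWords, brW0, List.mem_append, List.mem_map]
      exact Or.inl ⟨brW0 ps, brW0_mem ps, rfl⟩

lemma brWords_length {rs : List (ℕ × ℕ)} {w : List ℕ} (h : w ∈ brWords rs) :
    w.length = 2 * rs.length := by
  induction rs generalizing w with
  | nil => simp [brWords] at h; simp [h]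
  | cons p ps ih =>
    simp only [brWords, List.mem_append, List.mem_map] at h
    rcases h with ⟨w', hw', rfl⟩ | ⟨w', hw', rfl⟩ <;>
      simp [ih hw', List.length_cons] <;> ring

/-- The image of the commutator product in the monoid algebra. -/
noncomputable def brG (F : Type) [Field F] : List (ℕ × ℕ) → MonoidAlgebra F (FreeMonoid ℕ)
  | [] => 1
  | p :: ps =>
      (single (ofList [p.1, p.2]) 1 - single (ofList [p.2, p.1]) 1) * brG F ps

lemma single_list_mul_apply (F : Type) [Field F] (l : List ℕ)
    (f : MonoidAlgebra F (FreeMonoid ℕ)) (u : List ℕ) :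
    (single (ofList l) (1 : F) * f).coeff (ofList u) =
      if l ++ u.drop l.length = u then f.coeff (ofList (u.drop l.length)) else 0 := by
  split_ifs with h
  · conv_lhs => rw [← h]
    rw [show (ofList (l ++ u.drop l.length) : FreeMonoid ℕ)
        = ofList l * ofList (u.drop l.length) from ofList_append _ _]
    rw [MonoidAlgebra.coeff_single_mul_eq_mul_coeff (x := f) _ (fun a _ => mul_right_inj _), one_mul]
  · apply MonoidAlgebra.single_mul_apply_of_not_exists_mul
    rintro ⟨d, hd⟩
    apply h
    have : u = l ++ toList d := congrArg toList hd
    rw [this, List.drop_left]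

lemma brG_apply_ne (F : Type) [Field F] {rs : List (ℕ × ℕ)} (hlt : ∀ p ∈ rs, p.1 < p.2)
    (u : List ℕ) : (brG F rs).coeff (ofList u) ≠ 0 ↔ u ∈ brWords rs := by
  induction rs generalizing u with
  | nil =>
    show (1 : MonoidAlgebra F (FreeMonoid ℕ)).coeff (ofList u) ≠ 0 ↔ _
    classical
    rw [MonoidAlgebra.one_def, MonoidAlgebra.single_apply]
    simp only [brWords, List.mem_singleton]
    constructor
    · intro h
      by_cases he : (1 : FreeMonoid ℕ) = ofList u
      · exact (congrArg toList he).symm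
      · rw [if_neg he] at h; exact absurd rfl h
    · rintro rfl; rw [ofList_nil, if_pos rfl]; exact one_ne_zero
  | cons p ps ih =>
    have hp : p.1 ≠ p.2 := ne_of_lt (hlt p (by simp))
    have hps : ∀ q ∈ ps, q.1 < q.2 := fun q hq => hlt q (by simp [hq])
    rw [show brG F (p :: ps)
        = (single (ofList [p.1, p.2]) 1 - single (ofList [p.2, p.1]) 1) * brG F ps from rfl]
    rw [sub_mul, MonoidAlgebra.coeff_sub, Finsupp.sub_apply, single_list_mul_apply, single_list_mul_apply]
    simp only [List.length_cons, List.length_nil, List.cons_append, List.nil_append]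
    by_cases h1 : p.1 :: p.2 :: u.drop 2 = u
    · have h2 : ¬ (p.2 :: p.1 :: u.drop 2 = u) := by
        intro h2; rw [← h1] at h2
        injection h2 with e _
        exact hp e.symm
      rw [if_pos h1, if_neg h2, sub_zero, ih hps]
      constructor
      · intro hd
        simp only [brWords, List.mem_append, List.mem_map]
        exact Or.inl ⟨u.drop 2, hd, h1⟩
      · intro hmem
        simp only [brWords, List.mem_append, List.mem_map] at hmem
        rcases hmem with ⟨w, hw, rfl⟩ | ⟨w, hw, rfl⟩
        · simpa using hw
        · exfalso
          injection h1 with e _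
          exact hp e
    · by_cases h2 : p.2 :: p.1 :: u.drop 2 = u
      · rw [if_neg h1, if_pos h2, zero_sub, neg_ne_zero, ih hps]
        constructor
        · intro hd
          simp only [brWords, List.mem_append, List.mem_map]
          exact Or.inr ⟨u.drop 2, hd, h2⟩
        · intro hmem
          simp only [brWords, List.mem_append, List.mem_map] at hmem
          rcases hmem with ⟨w, hw, rfl⟩ | ⟨w, hw, rfl⟩
          · exfalso
            injection h2 with e _
            exact hp e.symm
          · simpa using hw
      · rw [if_neg h1, if_neg h2, sub_zero]
        constructor
        · intro h; exact absurd rfl h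
        · intro hmem; exfalso
          simp only [brWords, List.mem_append, List.mem_map] at hmem
          rcases hmem with ⟨w, hw, rfl⟩ | ⟨w, hw, rfl⟩
          · exact h1 rfl
          · exact h2 rfl

lemma equiv_ι (F : Type) [Field F] (a : ℕ) :
    FreeAlgebra.equivMonoidAlgebraFreeMonoid (FreeAlgebra.ι F a)
      = single (FreeMonoid.of a) (1 : F) := by
  show FreeAlgebra.lift F _ (FreeAlgebra.ι F a) = _
  rw [FreeAlgebra.lift_ι_apply]
  rfl

lemma equiv_bracketMonomial (F : Type) [Field F] (t : List ℕ) (rs : List (ℕ × ℕ)) :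
    FreeAlgebra.equivMonoidAlgebraFreeMonoid (bracketMonomial F t rs)
      = single (ofList t) 1 * brG F rs := by
  unfold bracketMonomial
  rw [map_mul]
  congr 1
  · induction t with
    | nil => simp [MonoidAlgebra.one_def, ofList_nil]
    | cons a t iht =>
      simp only [List.map_cons, List.prod_cons, map_mul, iht, equiv_ι]
      rw [MonoidAlgebra.single_mul_single, one_mul]
      rfl
  · induction rs with
    | nil => simp [brG]
    | cons p ps ihp =>
      simp only [List.map_cons, List.prod_cons, map_mul, map_sub, ihp, equiv_ι]
      rw [show brG F (p :: ps)
          = (single (ofList [p.1, p.2]) 1 - single (ofList [p.2, p.1]) 1) * brG F ps from rfl]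
      congr 2 <;>
      · rw [MonoidAlgebra.single_mul_single, one_mul]
        rfl

lemma key_mem (F : Type) [Field F] (t : List ℕ) {rs : List (ℕ × ℕ)}
    (hlt : ∀ p ∈ rs, p.1 < p.2) (u : List ℕ) :
    (FreeAlgebra.equivMonoidAlgebraFreeMonoid (bracketMonomial F t rs)).coeff (ofList u) ≠ 0
      ↔ ∃ w ∈ brWords rs, u = t ++ w := by
  rw [equiv_bracketMonomial, single_list_mul_apply]
  split_ifs with h
  · rw [brG_apply_ne F hlt]
    constructor
    · intro hd; exact ⟨u.drop t.length, hd, h.symm⟩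
    · rintro ⟨w, hw, rfl⟩; rwa [List.drop_left]
  · simp only [ne_eq, not_true_eq_false, false_iff]
    rintro ⟨w, hw, rfl⟩
    exact h (by rw [List.drop_left])

lemma prefix_len_le {t t' : List ℕ} {rs rs' : List (ℕ × ℕ)}
    (h : ∀ u, (∃ w ∈ brWords rs, u = t ++ w) → (∃ w ∈ brWords rs', u = t' ++ w))
    (hk : rs ≠ []) (hlt : ∀ p ∈ rs, p.1 < p.2) : t'.length ≤ t.length := by
  rcases rs with _ | ⟨p, ps⟩
  · exact absurd rfl hk
  have hp : p.1 ≠ p.2 := ne_of_lt (hlt p (by simp))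
  have hm1 : (p.1 :: p.2 :: brW0 ps) ∈ brWords (p :: ps) := by
    simp only [brWords, List.mem_append, List.mem_map]
    exact Or.inl ⟨brW0 ps, brW0_mem ps, rfl⟩
  have hm2 : (p.2 :: p.1 :: brW0 ps) ∈ brWords (p :: ps) := by
    simp only [brWords, List.mem_append, List.mem_map]
    exact Or.inr ⟨brW0 ps, brW0_mem ps, rfl⟩
  obtain ⟨w1, _, hw1⟩ := h _ ⟨_, hm1, rfl⟩
  obtain ⟨w2, _, hw2⟩ := h _ ⟨_, hm2, rfl⟩
  by_contra hlen
  push_neg at hlen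
  apply hp
  have e1 : (t ++ p.1 :: p.2 :: brW0 ps)[t.length]? = some p.1 := by
    rw [List.getElem?_append_right (le_refl _)]
    simp
  have e2 : (t ++ p.2 :: p.1 :: brW0 ps)[t.length]? = some p.2 := by
    rw [List.getElem?_append_right (le_refl _)]
    simp
  rw [hw1, List.getElem?_append_left hlen] at e1
  rw [hw2, List.getElem?_append_left hlen] at e2
  rw [e1] at e2
  exact Option.some.inj e2

lemma brWords_injective {rs rs' : List (ℕ × ℕ)}
    (hlt : ∀ p ∈ rs, p.1 < p.2) (hlt' : ∀ p ∈ rs', p.1 < p.2)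
    (h : ∀ u, u ∈ brWords rs ↔ u ∈ brWords rs') : rs = rs' := by
  induction rs generalizing rs' with
  | nil =>
    have h0 : ([] : List ℕ) ∈ brWords rs' := (h []).mp (by simp [brWords])
    have := brWords_length h0
    simp at this
    simp [this]
  | cons p ps ih =>
    have hlen : (brW0 (p :: ps)).length = 2 * rs'.length :=
      brWords_length ((h _).mp (brW0_mem _))
    have hlen2 : (brW0 (p :: ps)).length = 2 * (ps.length + 1) := brWords_length (brW0_mem _)
    rcases rs' with _ | ⟨p', ps'⟩
    · rw [hlen2] at hlen; simp at hlen
    have hp : p.1 ≠ p.2 := ne_of_lt (hlt p (by simp))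
    have hp' : p'.1 < p'.2 := hlt' p' (by simp)
    have hps : ∀ q ∈ ps, q.1 < q.2 := fun q hq => hlt q (by simp [hq])
    have hps' : ∀ q ∈ ps', q.1 < q.2 := fun q hq => hlt' q (by simp [hq])
    -- identify the head pair
    have hm1 : (p.1 :: p.2 :: brW0 ps) ∈ brWords (p' :: ps') := (h _).mp (by
      simp only [brWords, List.mem_append, List.mem_map]
      exact Or.inl ⟨brW0 ps, brW0_mem ps, rfl⟩)
    simp only [brWords, List.mem_append, List.mem_map] at hm1
    have hpp' : p = p' := by
      rcases hm1 with ⟨w, _, hw⟩ | ⟨w, _, hw⟩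
      · injection hw with e1 hw2
        injection hw2 with e2 _
        exact (Prod.ext e1 e2).symm
      · exfalso
        injection hw with e1 hw2
        injection hw2 with e2 _
        have := hlt p (by simp)
        omega
    subst hpp'
    -- cancel the head pair
    have hcancel : ∀ u, u ∈ brWords ps ↔ u ∈ brWords ps' := by
      intro u
      constructor
      · intro hu
        have hmm : (p.1 :: p.2 :: u) ∈ brWords (p :: ps') := (h _).mp (by
          simp only [brWords, List.mem_append, List.mem_map]
          exact Or.inl ⟨u, hu, rfl⟩)
        simp only [brWords, List.mem_append, List.mem_map] at hmm
        rcases hmm with ⟨w, hw, hww⟩ | ⟨w, hw, hww⟩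
        · injection hww with _ hww2
          injection hww2 with _ e
          rwa [e] at hw
        · injection hww with e _
          exact absurd e (Ne.symm hp)
      · intro hu
        have hmm : (p.1 :: p.2 :: u) ∈ brWords (p :: ps) := (h _).mpr (by
          simp only [brWords, List.mem_append, List.mem_map]
          exact Or.inl ⟨u, hu, rfl⟩)
        simp only [brWords, List.mem_append, List.mem_map] at hmm
        rcases hmm with ⟨w, hw, hww⟩ | ⟨w, hw, hww⟩
        · injection hww with _ hww2
          injection hww2 with _ e
          rwa [e] at hw
        · injection hww with e _
          exact absurd e (Ne.symm hp)
    rw [ih hps hps' hcancel]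

/-- If two bracket-monomials are equal in the free algebra, then they coincide. -/
theorem bracketMonomial_injective (F : Type) [Field F]
    (t t' : List ℕ) (rs rs' : List (ℕ × ℕ))
    (hk : rs ≠ []) (hk' : rs' ≠ [])
    (hlt : ∀ p ∈ rs, p.1 < p.2) (hlt' : ∀ p ∈ rs', p.1 < p.2)
    (heq : bracketMonomial F t rs = bracketMonomial F t' rs') :
    t = t' ∧ rs = rs' := by
  have hmem : ∀ u, (∃ w ∈ brWords rs, u = t ++ w) ↔ (∃ w ∈ brWords rs', u = t' ++ w) := by
    intro u
    rw [← key_mem F t hlt u, ← key_mem F t' hlt' u, heq]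
  have hle1 : t'.length ≤ t.length :=
    prefix_len_le (fun u hu => (hmem u).mp hu) hk hlt
  have hle2 : t.length ≤ t'.length :=
    prefix_len_le (fun u hu => (hmem u).mpr hu) hk' hlt'
  have hlen : t.length = t'.length := le_antisymm hle2 hle1
  have htt : t = t' := by
    rcases rs with _ | ⟨p, ps⟩
    · exact absurd rfl hk
    obtain ⟨w, _, hw⟩ := (hmem _).mp ⟨_,
      (by simp only [brWords, List.mem_append, List.mem_map]
          exact Or.inl ⟨brW0 ps, brW0_mem ps, rfl⟩ :
        (p.1 :: p.2 :: brW0 ps) ∈ brWords (p :: ps)), rfl⟩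
    have h1 : (t ++ p.1 :: p.2 :: brW0 ps).take t.length = t := List.take_left
    rw [hw, hlen, List.take_left] at h1
    exact h1.symm
  subst htt
  refine ⟨rfl, brWords_injective hlt hlt' fun u => ?_⟩
  constructor
  · intro hu
    obtain ⟨w, hw, hww⟩ := (hmem (t ++ u)).mp ⟨u, hu, rfl⟩
    rwa [← List.append_cancel_left hww] at hw
  · intro hu
    obtain ⟨w, hw, hww⟩ := (hmem (t ++ u)).mpr ⟨u, hu, rfl⟩
    rwa [← List.append_cancel_left hww] at hw
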